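/- Let g be a symmetric positive definite n×n real matrix (n ≥ 2), h a symmetric n×n real matrix, and Ψ a (1,2)-tensor symmetric in its lower indices with con(Ψ) = 0. Then the real function t ↦ |Ψ|²_{g+th} · √det(g+th), defined for t near 0 (where g+th is positive definite), is differentiable at t = 0 with derivative equal to ⟨T_g(Ψ), h⟩_g · √det(g), where ⟨T,h⟩_g = Σ T_{ij} g^{ia} g^{jb} h_{ab}, T_g(Ψ) = (1/2)|Ψ|²_g g + Ψ⊛_g Ψ, and (Ψ⊛_g Ψ)_{ij} = Σ Ψ^k_{uv} Ψ^a_{bc} g_{ia} g_{jk} g^{ub} g^{vc} − 2 Σ Ψ^k_{jc} Ψ^a_{ib} g_{ak} g^{bc}. -/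

import Mathlib

open Matrix BigOperators

noncomputable section

namespace ProjFunctional

/-- Contraction of a (1,2)-tensor: `con(Φ)_i = Σ_k Φ^k_{ik}`. -/
def conT {n : ℕ} (Φ : Fin n → Fin n → Fin n → ℝ) : Fin n → ℝ :=
  fun i => ∑ k, Φ k i k

/-- `Sym(α)^i_{jk} = δ^i_j α_k + δ^i_k α_j`. -/
def symT {n : ℕ} (α : Fin n → ℝ) : Fin n → Fin n → Fin n → ℝ :=
  fun i j k => (if i = j then α k else 0) + (if i = k then α j else 0)

/-- Trace-free part `Φ₀ = Φ - (1/(n+1)) Sym(con Φ)`. -/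
def tfT {n : ℕ} (Φ : Fin n → Fin n → Fin n → ℝ) : Fin n → Fin n → Fin n → ℝ :=
  fun i j k => Φ i j k - (1 / ((n : ℝ) + 1)) * symT (conT Φ) i j k

/-- `(g⊗X)^i_{jk} = X^i g_{jk}`. -/
def gT {n : ℕ} (g : Matrix (Fin n) (Fin n) ℝ) (X : Fin n → ℝ) :
    Fin n → Fin n → Fin n → ℝ :=
  fun i j k => X i * g j k

/-- Metric trace `(tr_g Φ)^i = Σ_{j,k} g^{jk} Φ^i_{jk}` (using the inverse matrix `g⁻¹`). -/
def trg {n : ℕ} (g : Matrix (Fin n) (Fin n) ℝ) (Φ : Fin n → Fin n → Fin n → ℝ) :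
    Fin n → ℝ :=
  fun i => ∑ j, ∑ k, g⁻¹ j k * Φ i j k

/-- Inner product `⟨Φ,Ψ⟩_g = Σ Φ^i_{jk} g^{jb} g^{kc} g_{ia} Ψ^a_{bc}` on (1,2)-tensors. -/
def ipT {n : ℕ} (g : Matrix (Fin n) (Fin n) ℝ) (Φ Ψ : Fin n → Fin n → Fin n → ℝ) : ℝ :=
  ∑ i, ∑ j, ∑ k, ∑ a, ∑ b, ∑ c, Φ i j k * g⁻¹ j b * g⁻¹ k c * g i a * Ψ a b c

/-- `|Φ|²_g = ⟨Φ,Φ⟩_g`. -/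
def norm2T {n : ℕ} (g : Matrix (Fin n) (Fin n) ℝ) (Φ : Fin n → Fin n → Fin n → ℝ) : ℝ :=
  ipT g Φ Φ

/-- `|X|²_g = Σ g_{ij} X^i X^j` for a vector `X`. -/
def vnorm2 {n : ℕ} (g : Matrix (Fin n) (Fin n) ℝ) (X : Fin n → ℝ) : ℝ :=
  ∑ i, ∑ j, g i j * X i * X j

/-- `⟨X,Y⟩_g = Σ g_{ij} X^i Y^j` for vectors. -/
def vip {n : ℕ} (g : Matrix (Fin n) (Fin n) ℝ) (X Y : Fin n → ℝ) : ℝ :=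
  ∑ i, ∑ j, g i j * X i * Y j

/-- `|α|²_g = Σ g^{ij} α_i α_j` for a covector `α`. -/
def cnorm2 {n : ℕ} (g : Matrix (Fin n) (Fin n) ℝ) (α : Fin n → ℝ) : ℝ :=
  ∑ i, ∑ j, g⁻¹ i j * α i * α j

/-- Musical flat `(X♭)_i = Σ_j g_{ij} X^j`. -/
def flatT {n : ℕ} (g : Matrix (Fin n) (Fin n) ℝ) (X : Fin n → ℝ) : Fin n → ℝ :=
  fun i => ∑ j, g i j * X j

/-- The constant `m = (n+2)(n-1)/(n+1)`. -/
def mconst (n : ℕ) : ℝ := ((n : ℝ) + 2) * ((n : ℝ) - 1) / ((n : ℝ) + 1)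

/-- `(Ψ ⊛_g Ψ)_{ij} = Σ Ψ^k_{uv} Ψ^a_{bc} g_{ia} g_{jk} g^{ub} g^{vc}
      - 2 Σ Ψ^k_{jc} Ψ^a_{ib} g_{ak} g^{bc}`. -/
def circT {n : ℕ} (g : Matrix (Fin n) (Fin n) ℝ) (Ψ : Fin n → Fin n → Fin n → ℝ) :
    Fin n → Fin n → ℝ :=
  fun i j =>
    (∑ k, ∑ u, ∑ v, ∑ a, ∑ b, ∑ c,
      Ψ k u v * Ψ a b c * g i a * g j k * g⁻¹ u b * g⁻¹ v c)
    - 2 * ∑ k, ∑ c, ∑ a, ∑ b, Ψ k j c * Ψ a i b * g a k * g⁻¹ b c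

/-- Stress-energy tensor `T_g(Ψ) = (1/2)|Ψ|²_g g + Ψ ⊛_g Ψ`. -/
def stressEnergy {n : ℕ} (g : Matrix (Fin n) (Fin n) ℝ)
    (Ψ : Fin n → Fin n → Fin n → ℝ) : Fin n → Fin n → ℝ :=
  fun i j => (1 / 2) * norm2T g Ψ * g i j + circT g Ψ i j

/-- `⟨T,h⟩_g = Σ T_{ij} g^{ia} g^{jb} h_{ab}` for (0,2)-tensors. -/
def ip2 {n : ℕ} (g : Matrix (Fin n) (Fin n) ℝ) (T h : Fin n → Fin n → ℝ) : ℝ :=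
  ∑ i, ∑ j, ∑ a, ∑ b, T i j * g⁻¹ i a * g⁻¹ j b * h a b


/-! ### Auxiliary analytic lemmas -/

lemma aux_diffAt_det {n : ℕ} (A : ℝ → Matrix (Fin n) (Fin n) ℝ)
    (hA : ∀ i j, DifferentiableAt ℝ (fun t => A t i j) 0) :
    DifferentiableAt ℝ (fun t => (A t).det) 0 := by
  simp only [Matrix.det_apply']
  exact DifferentiableAt.fun_sum fun σ _ =>
    (DifferentiableAt.fun_finsetProd fun i _ => hA (σ i) i).const_mul _

lemma aux_diffAt_adj {n : ℕ} (A : ℝ → Matrix (Fin n) (Fin n) ℝ)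
    (hA : ∀ i j, DifferentiableAt ℝ (fun t => A t i j) 0) (i j : Fin n) :
    DifferentiableAt ℝ (fun t => (A t).adjugate i j) 0 := by
  simp only [Matrix.adjugate_apply]
  refine aux_diffAt_det _ fun p q => ?_
  by_cases hp : p = j
  · simp only [Matrix.updateRow_apply, hp, if_pos rfl]
    exact differentiableAt_const _
  · simp only [Matrix.updateRow_apply, if_neg hp]
    exact hA p q

lemma aux_diffAt_inv_entry {n : ℕ} (A : ℝ → Matrix (Fin n) (Fin n) ℝ)
    (hA : ∀ i j, DifferentiableAt ℝ (fun t => A t i j) 0)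
    (hdet : (A 0).det ≠ 0) (i j : Fin n) :
    DifferentiableAt ℝ (fun t => (A t)⁻¹ i j) 0 := by
  have h1 : (fun t => (A t)⁻¹ i j) = fun t => ((A t).det)⁻¹ * (A t).adjugate i j := by
    funext t
    rw [Matrix.inv_def, Ring.inverse_eq_inv, Matrix.smul_apply, smul_eq_mul]
  rw [h1]
  exact ((aux_diffAt_det A hA).inv hdet).mul (aux_diffAt_adj A hA i j)

lemma aux_hMd {n : ℕ} (g h : Matrix (Fin n) (Fin n) ℝ) (i j : Fin n) :
    HasDerivAt (fun t : ℝ => (g + t • h) i j) (h i j) 0 := by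
  have h1 : (fun t : ℝ => (g + t • h) i j) = fun t => g i j + t * h i j := by
    funext t; simp [Matrix.add_apply, Matrix.smul_apply, smul_eq_mul]
  rw [h1]
  simpa using ((hasDerivAt_id (0:ℝ)).mul_const (h i j)).const_add (g i j)

lemma aux_hev {n : ℕ} (g h : Matrix (Fin n) (Fin n) ℝ) (hdetg : g.det ≠ 0) :
    ∀ᶠ t : ℝ in nhds 0, (g + t • h).det ≠ 0 := by
  have hc : Continuous fun t : ℝ => (g + t • h).det :=
    (continuous_const.add (continuous_id.smul continuous_const)).matrix_det
  have h0 : (g + (0:ℝ) • h).det ≠ 0 := by simpa using hdetg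
  exact hc.continuousAt.eventually (eventually_ne_nhds h0)

lemma aux_hNdiff {n : ℕ} (g h : Matrix (Fin n) (Fin n) ℝ) (hdetg : g.det ≠ 0) (i j : Fin n) :
    DifferentiableAt ℝ (fun t : ℝ => (g + t • h)⁻¹ i j) 0 := by
  refine aux_diffAt_inv_entry _ (fun i j => (aux_hMd g h i j).differentiableAt) ?_ i j
  simpa using hdetg

lemma aux_hNd {n : ℕ} (g h : Matrix (Fin n) (Fin n) ℝ) (hdetg : g.det ≠ 0) (i j : Fin n) :
    HasDerivAt (fun t : ℝ => (g + t • h)⁻¹ i j) ((-(g⁻¹ * h * g⁻¹)) i j) 0 := by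
  set D : Matrix (Fin n) (Fin n) ℝ :=
    Matrix.of fun i j => deriv (fun t : ℝ => (g + t • h)⁻¹ i j) 0 with hD
  have hDd : ∀ i j, HasDerivAt (fun t : ℝ => (g + t • h)⁻¹ i j) (D i j) 0 :=
    fun i j => (aux_hNdiff g h hdetg i j).hasDerivAt
  have hz : ∀ i j, (∑ k, (h i k * g⁻¹ k j + g i k * D k j)) = 0 := by
    intro i j
    have h1 : HasDerivAt (fun t : ℝ => ∑ k, (g + t • h) i k * (g + t • h)⁻¹ k j)
        (∑ k, (h i k * g⁻¹ k j + g i k * D k j)) 0 := by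
      refine HasDerivAt.fun_sum fun k _ => ?_
      have := (aux_hMd g h i k).fun_mul (hDd k j)
      refine this.congr_deriv ?_
      simp
    have h2 : HasDerivAt (fun t : ℝ => ∑ k, (g + t • h) i k * (g + t • h)⁻¹ k j)
        (0 : ℝ) 0 := by
      refine (hasDerivAt_const (0:ℝ) ((1 : Matrix (Fin n) (Fin n) ℝ) i j)).congr_of_eventuallyEq ?_
      refine (aux_hev g h hdetg).mono fun t ht => ?_
      have h4 : (g + t • h) * (g + t • h)⁻¹ = 1 := Matrix.mul_nonsing_inv _ ht.isUnit
      simp only [← Matrix.mul_apply, h4]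
    exact h1.unique h2
  have hmat : h * g⁻¹ + g * D = 0 := by
    ext i j
    simpa [Matrix.add_apply, Matrix.mul_apply, Finset.sum_add_distrib] using hz i j
  have h3 : g * D = -(h * g⁻¹) := by
    have h5 := hmat
    rw [add_comm] at h5
    exact add_eq_zero_iff_eq_neg.mp h5
  have hDeq : D = -(g⁻¹ * h * g⁻¹) := by
    calc D = (g⁻¹ * g) * D := by rw [Matrix.nonsing_inv_mul g hdetg.isUnit, one_mul]
    _ = g⁻¹ * (g * D) := by rw [Matrix.mul_assoc]
    _ = g⁻¹ * (-(h * g⁻¹)) := by rw [h3]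
    _ = -(g⁻¹ * h * g⁻¹) := by rw [Matrix.mul_neg, Matrix.mul_assoc]
  rw [← hDeq]
  exact hDd i j

lemma aux_hdetd {n : ℕ} (g h : Matrix (Fin n) (Fin n) ℝ) (hdetg : g.det ≠ 0) :
    HasDerivAt (fun t : ℝ => (g + t • h).det) (g.det * (g⁻¹ * h).trace) 0 := by
  have hfac : ∀ t : ℝ, (g + t • h).det = g.det * (1 + t • (g⁻¹ * h)).det := by
    intro t
    rw [← Matrix.det_mul]
    congr 1
    rw [Matrix.mul_add, Matrix.mul_one, Matrix.mul_smul, ← Matrix.mul_assoc,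
      Matrix.mul_nonsing_inv _ hdetg.isUnit, Matrix.one_mul]
  set Q : Polynomial ℝ := (Matrix.det (1 + (Polynomial.X : Polynomial ℝ) • (g⁻¹ * h).map Polynomial.C)).divX.divX with hQ
  have hfun : (fun t : ℝ => (g + t • h).det)
      = fun t : ℝ => g.det * (1 + (g⁻¹ * h).trace * t + Polynomial.eval t Q * t ^ 2) := by
    funext t
    rw [hfac t, Matrix.det_one_add_smul]
  rw [hfun]
  have ha : HasDerivAt (fun t : ℝ => 1 + (g⁻¹ * h).trace * t) ((g⁻¹ * h).trace) 0 := by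
    simpa using ((hasDerivAt_id (0:ℝ)).const_mul ((g⁻¹ * h).trace)).const_add 1
  have hb : HasDerivAt (fun t : ℝ => Polynomial.eval t Q * t ^ 2) 0 0 := by
    have := (Q.hasDerivAt (0:ℝ)).fun_mul (hasDerivAt_pow 2 (0:ℝ))
    simpa using this
  have hc := (ha.add hb).const_mul g.det
  simpa using hc

lemma aux_comb (A N tr d s : ℝ) (hd : s * s = d) (hs : s ≠ 0) :
    (A + N * tr / 2) * s = A * s + N * (d * tr / (2 * s)) := by
  subst hd; field_simp

/-! ### Flattening / reindexing machinery -/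

lemma flat4 {α : Type*} [Fintype α] (F : α → α → α → α → ℝ) :
    ∑ x : α × α × α × α, F x.1 x.2.1 x.2.2.1 x.2.2.2 =
      ∑ i, ∑ j, ∑ a, ∑ b, F i j a b := by
  simp only [Fintype.sum_prod_type]

lemma flat6 {α : Type*} [Fintype α] (F : α → α → α → α → α → α → ℝ) :
    ∑ x : α × α × α × α × α × α, F x.1 x.2.1 x.2.2.1 x.2.2.2.1 x.2.2.2.2.1 x.2.2.2.2.2 =
      ∑ i, ∑ j, ∑ k, ∑ a, ∑ b, ∑ c, F i j k a b c := by
  simp only [Fintype.sum_prod_type]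

lemma flat8 {α : Type*} [Fintype α] (F : α → α → α → α → α → α → α → α → ℝ) :
    ∑ x : α × α × α × α × α × α × α × α, F x.1 x.2.1 x.2.2.1 x.2.2.2.1 x.2.2.2.2.1 x.2.2.2.2.2.1 x.2.2.2.2.2.2.1 x.2.2.2.2.2.2.2 =
      ∑ i, ∑ j, ∑ k, ∑ a, ∑ b, ∑ c, ∑ p, ∑ q, F i j k a b c p q := by
  simp only [Fintype.sum_prod_type]

lemma flat10 {α : Type*} [Fintype α] (F : α → α → α → α → α → α → α → α → α → α → ℝ) :
    ∑ x : α × α × α × α × α × α × α × α × α × α, F x.1 x.2.1 x.2.2.1 x.2.2.2.1 x.2.2.2.2.1 x.2.2.2.2.2.1 x.2.2.2.2.2.2.1 x.2.2.2.2.2.2.2.1 x.2.2.2.2.2.2.2.2.1 x.2.2.2.2.2.2.2.2.2 =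
      ∑ i, ∑ j, ∑ a, ∑ b, ∑ k, ∑ u, ∑ v, ∑ w, ∑ y, ∑ z, F i j a b k u v w y z := by
  simp only [Fintype.sum_prod_type]

lemma auxSA_re {n : ℕ} (g h : Matrix (Fin n) (Fin n) ℝ) :
    (∑ i, ∑ j, ∑ a, ∑ b, g i j * g⁻¹ i a * g⁻¹ j b * h a b) =
    (∑ a, ∑ b, ∑ j, ∑ i, (h a b * g⁻¹ j b) * (g i j * g⁻¹ i a)) := by
  calc (∑ i, ∑ j, ∑ a, ∑ b, g i j * g⁻¹ i a * g⁻¹ j b * h a b)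
      = ∑ x : Fin n × Fin n × Fin n × Fin n, g x.1 x.2.1 * g⁻¹ x.1 x.2.2.1 * g⁻¹ x.2.1 x.2.2.2 * h x.2.2.1 x.2.2.2 :=
        (flat4 (fun i j a b => g i j * g⁻¹ i a * g⁻¹ j b * h a b)).symm
    _ = ∑ x : Fin n × Fin n × Fin n × Fin n, (h x.1 x.2.1 * g⁻¹ x.2.2.1 x.2.1) * (g x.2.2.2 x.2.2.1 * g⁻¹ x.2.2.2 x.1) :=
        Fintype.sum_equiv
          ⟨fun x => (x.2.2.1, x.2.2.2, x.2.1, x.1), fun x => (x.2.2.2, x.2.2.1, x.1, x.2.1),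
            by rintro ⟨i,j,a,b⟩; rfl, by rintro ⟨a,b,j,i⟩; rfl⟩ _ _
          (by rintro ⟨i,j,a,b⟩; simp only [Equiv.coe_fn_mk]; ring)
    _ = ∑ a, ∑ b, ∑ j, ∑ i, (h a b * g⁻¹ j b) * (g i j * g⁻¹ i a) := flat4 (fun a b j i => (h a b * g⁻¹ j b) * (g i j * g⁻¹ i a))

lemma auxSB1_re {n : ℕ} (g h : Matrix (Fin n) (Fin n) ℝ) (Ψ : Fin n → Fin n → Fin n → ℝ) :
    (∑ i, ∑ j, ∑ a, ∑ b, ∑ k, ∑ u, ∑ v, ∑ w, ∑ y, ∑ z, Ψ k u v * Ψ w y z * g i w * g j k * g⁻¹ u y * g⁻¹ v z * g⁻¹ i a * g⁻¹ j b * h a b) =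
    (∑ a, ∑ b, ∑ u, ∑ v, ∑ y, ∑ z, ∑ k, ∑ j, ∑ w, ∑ i, (Ψ k u v * Ψ w y z * g⁻¹ u y * g⁻¹ v z * h a b) * (g j k * g⁻¹ j b) * (g i w * g⁻¹ i a)) := by
  calc (∑ i, ∑ j, ∑ a, ∑ b, ∑ k, ∑ u, ∑ v, ∑ w, ∑ y, ∑ z, Ψ k u v * Ψ w y z * g i w * g j k * g⁻¹ u y * g⁻¹ v z * g⁻¹ i a * g⁻¹ j b * h a b)
      = ∑ x : Fin n × Fin n × Fin n × Fin n × Fin n × Fin n × Fin n × Fin n × Fin n × Fin n, Ψ x.2.2.2.2.1 x.2.2.2.2.2.1 x.2.2.2.2.2.2.1 * Ψ x.2.2.2.2.2.2.2.1 x.2.2.2.2.2.2.2.2.1 x.2.2.2.2.2.2.2.2.2 * g x.1 x.2.2.2.2.2.2.2.1 * g x.2.1 x.2.2.2.2.1 * g⁻¹ x.2.2.2.2.2.1 x.2.2.2.2.2.2.2.2.1 * g⁻¹ x.2.2.2.2.2.2.1 x.2.2.2.2.2.2.2.2.2 * g⁻¹ x.1 x.2.2.1 * g⁻¹ x.2.1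 x.2.2.2.1 * h x.2.2.1 x.2.2.2.1 :=
        (flat10 (fun i j a b k u v w y z => Ψ k u v * Ψ w y z * g i w * g j k * g⁻¹ u y * g⁻¹ v z * g⁻¹ i a * g⁻¹ j b * h a b)).symm
    _ = ∑ x : Fin n × Fin n × Fin n × Fin n × Fin n × Fin n × Fin n × Fin n × Fin n × Fin n, (Ψ x.2.2.2.2.2.2.1 x.2.2.1 x.2.2.2.1 * Ψ x.2.2.2.2.2.2.2.2.1 x.2.2.2.2.1 x.2.2.2.2.2.1 * g⁻¹ x.2.2.1 x.2.2.2.2.1 * g⁻¹ x.2.2.2.1 x.2.2.2.2.2.1 * h x.1 x.2.1) * (g x.2.2.2.2.2.2.2.1 x.2.2.2.2.2.2.1 * g⁻¹ x.2.2.2.2.2.2.2.1 x.2.1) * (g x.2.2.2.2.2.2.2.2.2 x.2.2.2.2.2.2.2.2.1 * g⁻¹ x.2.2.2.2.2.2.2.2.2 x.1) :=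
        Fintype.sum_equiv
          ⟨fun x => (x.2.2.1, x.2.2.2.1, x.2.2.2.2.2.1, x.2.2.2.2.2.2.1, x.2.2.2.2.2.2.2.2.1, x.2.2.2.2.2.2.2.2.2, x.2.2.2.2.1, x.2.1, x.2.2.2.2.2.2.2.1, x.1), fun x => (x.2.2.2.2.2.2.2.2.2, x.2.2.2.2.2.2.2.1, x.1, x.2.1, x.2.2.2.2.2.2.1, x.2.2.1, x.2.2.2.1, x.2.2.2.2.2.2.2.2.1, x.2.2.2.2.1, x.2.2.2.2.2.1),
            by rintro ⟨i,j,a,b,k,u,v,w,y,z⟩; rfl, by rintro ⟨a,b,u,v,y,z,k,j,w,i⟩; rfl⟩ _ _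
          (by rintro ⟨i,j,a,b,k,u,v,w,y,z⟩; simp only [Equiv.coe_fn_mk]; ring)
    _ = ∑ a, ∑ b, ∑ u, ∑ v, ∑ y, ∑ z, ∑ k, ∑ j, ∑ w, ∑ i, (Ψ k u v * Ψ w y z * g⁻¹ u y * g⁻¹ v z * h a b) * (g j k * g⁻¹ j b) * (g i w * g⁻¹ i a) := flat10 (fun a b u v y z k j w i => (Ψ k u v * Ψ w y z * g⁻¹ u y * g⁻¹ v z * h a b) * (g j k * g⁻¹ j b) * (g i w * g⁻¹ i a))

lemma auxSB1_fin {n : ℕ} (g h : Matrix (Fin n) (Fin n) ℝ) (Ψ : Fin n → Fin n → Fin n → ℝ) (hhs : ∀ i j, h i j = h j i) :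
    (∑ a, ∑ b, ∑ u, ∑ v, ∑ y, ∑ z, Ψ b u v * Ψ a y z * g⁻¹ u y * g⁻¹ v z * h a b) =
    (∑ i, ∑ j, ∑ k, ∑ d, ∑ e, ∑ c, Ψ i j k * Ψ d e c * (g⁻¹ j e * g⁻¹ k c * h i d)) := by
  calc (∑ a, ∑ b, ∑ u, ∑ v, ∑ y, ∑ z, Ψ b u v * Ψ a y z * g⁻¹ u y * g⁻¹ v z * h a b)
      = ∑ x : Fin n × Fin n × Fin n × Fin n × Fin n × Fin n, Ψ x.2.1 x.2.2.1 x.2.2.2.1 * Ψ x.1 x.2.2.2.2.1 x.2.2.2.2.2 * g⁻¹ x.2.2.1 x.2.2.2.2.1 * g⁻¹ x.2.2.2.1 x.2.2.2.2.2 * h x.1 x.2.1 :=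
        (flat6 (fun a b u v y z => Ψ b u v * Ψ a y z * g⁻¹ u y * g⁻¹ v z * h a b)).symm
    _ = ∑ x : Fin n × Fin n × Fin n × Fin n × Fin n × Fin n, Ψ x.1 x.2.1 x.2.2.1 * Ψ x.2.2.2.1 x.2.2.2.2.1 x.2.2.2.2.2 * (g⁻¹ x.2.1 x.2.2.2.2.1 * g⁻¹ x.2.2.1 x.2.2.2.2.2 * h x.1 x.2.2.2.1) :=
        Fintype.sum_equiv
          ⟨fun x => (x.2.1, x.2.2.1, x.2.2.2.1, x.1, x.2.2.2.2.1, x.2.2.2.2.2), fun x => (x.2.2.2.1, x.1, x.2.1, x.2.2.1, x.2.2.2.2.1, x.2.2.2.2.2),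
            by rintro ⟨a,b,u,v,y,z⟩; rfl, by rintro ⟨i,j,k,d,e,c⟩; rfl⟩ _ _
          (by rintro ⟨a,b,u,v,y,z⟩; simp only [Equiv.coe_fn_mk]; rw [hhs a b]; ring)
    _ = ∑ i, ∑ j, ∑ k, ∑ d, ∑ e, ∑ c, Ψ i j k * Ψ d e c * (g⁻¹ j e * g⁻¹ k c * h i d) := flat6 (fun i j k d e c => Ψ i j k * Ψ d e c * (g⁻¹ j e * g⁻¹ k c * h i d))

lemma auxSB2_re {n : ℕ} (g h : Matrix (Fin n) (Fin n) ℝ) (Ψ : Fin n → Fin n → Fin n → ℝ) (hgs : ∀ i j, g i j = g j i) (hGs : ∀ i j, g⁻¹ i j = g⁻¹ j i) (hhs : ∀ i j, h i j = h j i) :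
    (∑ i, ∑ j, ∑ a, ∑ b, ∑ k, ∑ c, ∑ w, ∑ y, Ψ k j c * Ψ w i y * g w k * g⁻¹ y c * g⁻¹ i a * g⁻¹ j b * h a b) =
    (∑ I, ∑ J, ∑ K, ∑ A, ∑ B, ∑ C, ∑ P, ∑ Q, Ψ I J K * Ψ A B C * (g⁻¹ J P * h P Q * g⁻¹ Q B * g⁻¹ K C * g I A)) := by
  calc (∑ i, ∑ j, ∑ a, ∑ b, ∑ k, ∑ c, ∑ w, ∑ y, Ψ k j c * Ψ w i y * g w k * g⁻¹ y c * g⁻¹ i a * g⁻¹ j b * h a b)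
      = ∑ x : Fin n × Fin n × Fin n × Fin n × Fin n × Fin n × Fin n × Fin n, Ψ x.2.2.2.2.1 x.2.1 x.2.2.2.2.2.1 * Ψ x.2.2.2.2.2.2.1 x.1 x.2.2.2.2.2.2.2 * g x.2.2.2.2.2.2.1 x.2.2.2.2.1 * g⁻¹ x.2.2.2.2.2.2.2 x.2.2.2.2.2.1 * g⁻¹ x.1 x.2.2.1 * g⁻¹ x.2.1 x.2.2.2.1 * h x.2.2.1 x.2.2.2.1 :=
        (flat8 (fun i j a b k c w y => Ψ k j c * Ψ w i y * g w k * g⁻¹ y c * g⁻¹ i a * g⁻¹ j b * h a b)).symm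
    _ = ∑ x : Fin n × Fin n × Fin n × Fin n × Fin n × Fin n × Fin n × Fin n, Ψ x.1 x.2.1 x.2.2.1 * Ψ x.2.2.2.1 x.2.2.2.2.1 x.2.2.2.2.2.1 * (g⁻¹ x.2.1 x.2.2.2.2.2.2.1 * h x.2.2.2.2.2.2.1 x.2.2.2.2.2.2.2 * g⁻¹ x.2.2.2.2.2.2.2 x.2.2.2.2.1 * g⁻¹ x.2.2.1 x.2.2.2.2.2.1 * g x.1 x.2.2.2.1) :=
        Fintype.sum_equiv
          ⟨fun x => (x.2.2.2.2.1, x.2.1, x.2.2.2.2.2.1, x.2.2.2.2.2.2.1, x.1, x.2.2.2.2.2.2.2, x.2.2.2.1, x.2.2.1), fun x => (x.2.2.2.2.1, x.2.1, x.2.2.2.2.2.2.2, x.2.2.2.2.2.2.1, x.1, x.2.2.1, x.2.2.2.1, x.2.2.2.2.2.1),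
            by rintro ⟨i,j,a,b,k,c,w,y⟩; rfl, by rintro ⟨I,J,K,A,B,C,P,Q⟩; rfl⟩ _ _
          (by rintro ⟨i,j,a,b,k,c,w,y⟩; simp only [Equiv.coe_fn_mk]; rw [hhs a b, hGs i a, hGs y c, hgs w k]; ring)
    _ = ∑ I, ∑ J, ∑ K, ∑ A, ∑ B, ∑ C, ∑ P, ∑ Q, Ψ I J K * Ψ A B C * (g⁻¹ J P * h P Q * g⁻¹ Q B * g⁻¹ K C * g I A) := flat8 (fun I J K A B C P Q => Ψ I J K * Ψ A B C * (g⁻¹ J P * h P Q * g⁻¹ Q B * g⁻¹ K C * g I A))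

lemma auxD1_re {n : ℕ} (g h : Matrix (Fin n) (Fin n) ℝ) (Ψ : Fin n → Fin n → Fin n → ℝ) :
    (∑ i, ∑ j, ∑ k, ∑ a, ∑ b, ∑ c, ∑ q, ∑ p, g⁻¹ j p * h p q * (g⁻¹ q b * (Ψ i j k * Ψ a b c * (g⁻¹ k c * g i a)))) =
    (∑ I, ∑ J, ∑ K, ∑ A, ∑ B, ∑ C, ∑ P, ∑ Q, Ψ I J K * Ψ A B C * (g⁻¹ J P * h P Q * g⁻¹ Q B * g⁻¹ K C * g I A)) := by
  calc (∑ i, ∑ j, ∑ k, ∑ a, ∑ b, ∑ c, ∑ q, ∑ p, g⁻¹ j p * h p q * (g⁻¹ q b * (Ψ i j k * Ψ a b c * (g⁻¹ k c * g i a))))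
      = ∑ x : Fin n × Fin n × Fin n × Fin n × Fin n × Fin n × Fin n × Fin n, g⁻¹ x.2.1 x.2.2.2.2.2.2.2 * h x.2.2.2.2.2.2.2 x.2.2.2.2.2.2.1 * (g⁻¹ x.2.2.2.2.2.2.1 x.2.2.2.2.1 * (Ψ x.1 x.2.1 x.2.2.1 * Ψ x.2.2.2.1 x.2.2.2.2.1 x.2.2.2.2.2.1 * (g⁻¹ x.2.2.1 x.2.2.2.2.2.1 * g x.1 x.2.2.2.1))) :=
        (flat8 (fun i j k a b c q p => g⁻¹ j p * h p q * (g⁻¹ q b * (Ψ i j k * Ψ a b c * (g⁻¹ k c * g i a))))).symm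
    _ = ∑ x : Fin n × Fin n × Fin n × Fin n × Fin n × Fin n × Fin n × Fin n, Ψ x.1 x.2.1 x.2.2.1 * Ψ x.2.2.2.1 x.2.2.2.2.1 x.2.2.2.2.2.1 * (g⁻¹ x.2.1 x.2.2.2.2.2.2.1 * h x.2.2.2.2.2.2.1 x.2.2.2.2.2.2.2 * g⁻¹ x.2.2.2.2.2.2.2 x.2.2.2.2.1 * g⁻¹ x.2.2.1 x.2.2.2.2.2.1 * g x.1 x.2.2.2.1) :=
        Fintype.sum_equiv
          ⟨fun x => (x.1, x.2.1, x.2.2.1, x.2.2.2.1, x.2.2.2.2.1, x.2.2.2.2.2.1, x.2.2.2.2.2.2.2, x.2.2.2.2.2.2.1), fun x => (x.1, x.2.1, x.2.2.1, x.2.2.2.1, x.2.2.2.2.1, x.2.2.2.2.2.1, x.2.2.2.2.2.2.2, x.2.2.2.2.2.2.1),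
            by rintro ⟨i,j,k,a,b,c,q,p⟩; rfl, by rintro ⟨I,J,K,A,B,C,P,Q⟩; rfl⟩ _ _
          (by rintro ⟨i,j,k,a,b,c,q,p⟩; simp only [Equiv.coe_fn_mk]; ring)
    _ = ∑ I, ∑ J, ∑ K, ∑ A, ∑ B, ∑ C, ∑ P, ∑ Q, Ψ I J K * Ψ A B C * (g⁻¹ J P * h P Q * g⁻¹ Q B * g⁻¹ K C * g I A) := flat8 (fun I J K A B C P Q => Ψ I J K * Ψ A B C * (g⁻¹ J P * h P Q * g⁻¹ Q B * g⁻¹ K C * g I A))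

lemma auxD2_re {n : ℕ} (g h : Matrix (Fin n) (Fin n) ℝ) (Ψ : Fin n → Fin n → Fin n → ℝ) (hΨ : ∀ i j k, Ψ i j k = Ψ i k j) :
    (∑ i, ∑ j, ∑ k, ∑ a, ∑ b, ∑ c, ∑ q, ∑ p, g⁻¹ k p * h p q * (g⁻¹ q c * (Ψ i j k * Ψ a b c * (g⁻¹ j b * g i a)))) =
    (∑ I, ∑ J, ∑ K, ∑ A, ∑ B, ∑ C, ∑ P, ∑ Q, Ψ I J K * Ψ A B C * (g⁻¹ J P * h P Q * g⁻¹ Q B * g⁻¹ K C * g I A)) := by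
  calc (∑ i, ∑ j, ∑ k, ∑ a, ∑ b, ∑ c, ∑ q, ∑ p, g⁻¹ k p * h p q * (g⁻¹ q c * (Ψ i j k * Ψ a b c * (g⁻¹ j b * g i a))))
      = ∑ x : Fin n × Fin n × Fin n × Fin n × Fin n × Fin n × Fin n × Fin n, g⁻¹ x.2.2.1 x.2.2.2.2.2.2.2 * h x.2.2.2.2.2.2.2 x.2.2.2.2.2.2.1 * (g⁻¹ x.2.2.2.2.2.2.1 x.2.2.2.2.2.1 * (Ψ x.1 x.2.1 x.2.2.1 * Ψ x.2.2.2.1 x.2.2.2.2.1 x.2.2.2.2.2.1 * (g⁻¹ x.2.1 x.2.2.2.2.1 * g x.1 x.2.2.2.1))) :=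
        (flat8 (fun i j k a b c q p => g⁻¹ k p * h p q * (g⁻¹ q c * (Ψ i j k * Ψ a b c * (g⁻¹ j b * g i a))))).symm
    _ = ∑ x : Fin n × Fin n × Fin n × Fin n × Fin n × Fin n × Fin n × Fin n, Ψ x.1 x.2.1 x.2.2.1 * Ψ x.2.2.2.1 x.2.2.2.2.1 x.2.2.2.2.2.1 * (g⁻¹ x.2.1 x.2.2.2.2.2.2.1 * h x.2.2.2.2.2.2.1 x.2.2.2.2.2.2.2 * g⁻¹ x.2.2.2.2.2.2.2 x.2.2.2.2.1 * g⁻¹ x.2.2.1 x.2.2.2.2.2.1 * g x.1 x.2.2.2.1) :=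
        Fintype.sum_equiv
          ⟨fun x => (x.1, x.2.2.1, x.2.1, x.2.2.2.1, x.2.2.2.2.2.1, x.2.2.2.2.1, x.2.2.2.2.2.2.2, x.2.2.2.2.2.2.1), fun x => (x.1, x.2.2.1, x.2.1, x.2.2.2.1, x.2.2.2.2.2.1, x.2.2.2.2.1, x.2.2.2.2.2.2.2, x.2.2.2.2.2.2.1),
            by rintro ⟨i,j,k,a,b,c,q,p⟩; rfl, by rintro ⟨I,J,K,A,B,C,P,Q⟩; rfl⟩ _ _
          (by rintro ⟨i,j,k,a,b,c,q,p⟩; simp only [Equiv.coe_fn_mk]; rw [hΨ i j k, hΨ a b c]; ring)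
    _ = ∑ I, ∑ J, ∑ K, ∑ A, ∑ B, ∑ C, ∑ P, ∑ Q, Ψ I J K * Ψ A B C * (g⁻¹ J P * h P Q * g⁻¹ Q B * g⁻¹ K C * g I A) := flat8 (fun I J K A B C P Q => Ψ I J K * Ψ A B C * (g⁻¹ J P * h P Q * g⁻¹ Q B * g⁻¹ K C * g I A))


lemma aux_pull4 {n : ℕ} (c : ℝ) (F : Fin n → Fin n → Fin n → Fin n → ℝ) :
    ∑ i, ∑ j, ∑ a, ∑ b, c * F i j a b = c * ∑ i, ∑ j, ∑ a, ∑ b, F i j a b := by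
  simp only [← Finset.mul_sum]

lemma aux_sum_gG {n : ℕ} (g : Matrix (Fin n) (Fin n) ℝ) (hdetg : g.det ≠ 0)
    (hGs : ∀ i j, g⁻¹ i j = g⁻¹ j i) (c a : Fin n) :
    ∑ i, g i c * g⁻¹ i a = if a = c then 1 else 0 := by
  have h1 : ∑ i, g i c * g⁻¹ i a = ∑ i, g⁻¹ a i * g i c := by
    refine Finset.sum_congr rfl fun i _ => ?_
    rw [hGs i a]; ring
  rw [h1, ← Matrix.mul_apply, Matrix.nonsing_inv_mul g hdetg.isUnit, Matrix.one_apply]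

lemma aux_collapse {n : ℕ} (g : Matrix (Fin n) (Fin n) ℝ) (hdetg : g.det ≠ 0)
    (hGs : ∀ i j, g⁻¹ i j = g⁻¹ j i) (a : Fin n) (S : Fin n → ℝ) :
    (∑ c, ∑ i, S c * (g i c * g⁻¹ i a)) = S a := by
  simp only [← Finset.mul_sum, aux_sum_gG g hdetg hGs, mul_ite, mul_one, mul_zero,
    Finset.sum_ite_eq, Finset.mem_univ, if_true]

lemma aux_Eexp {n : ℕ} (g h : Matrix (Fin n) (Fin n) ℝ) (j b : Fin n) (C : ℝ) :
    (-(g⁻¹ * h * g⁻¹)) j b * C = -∑ q, ∑ p, g⁻¹ j p * h p q * (g⁻¹ q b * C) := by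
  have h1 : (g⁻¹ * h * g⁻¹) j b = ∑ q, (∑ p, g⁻¹ j p * h p q) * g⁻¹ q b := by
    simp [Matrix.mul_apply]
  rw [Matrix.neg_apply, h1, neg_mul, Finset.sum_mul]
  refine neg_inj.mpr (Finset.sum_congr rfl fun q _ => ?_)
  rw [Finset.sum_mul, Finset.sum_mul]
  exact Finset.sum_congr rfl fun p _ => by ring

/-! ### The contraction identities -/

lemma auxSA {n : ℕ} (g h : Matrix (Fin n) (Fin n) ℝ) (hdetg : g.det ≠ 0)
    (hGs : ∀ i j, g⁻¹ i j = g⁻¹ j i) (hhs : ∀ i j, h i j = h j i) :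
    (∑ i, ∑ j, ∑ a, ∑ b, g i j * g⁻¹ i a * g⁻¹ j b * h a b) = (g⁻¹ * h).trace := by
  calc (∑ i, ∑ j, ∑ a, ∑ b, g i j * g⁻¹ i a * g⁻¹ j b * h a b)
      = ∑ a, ∑ b, ∑ j, ∑ i, (h a b * g⁻¹ j b) * (g i j * g⁻¹ i a) := auxSA_re g h
    _ = ∑ a, ∑ b, h a b * g⁻¹ a b := by
        refine Finset.sum_congr rfl fun a _ => Finset.sum_congr rfl fun b _ => ?_
        exact aux_collapse g hdetg hGs a (fun j => h a b * g⁻¹ j b)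
    _ = (g⁻¹ * h).trace := by
        simp only [Matrix.trace, Matrix.diag, Matrix.mul_apply]
        refine Finset.sum_congr rfl fun a _ => Finset.sum_congr rfl fun b _ => ?_
        rw [hhs a b]; ring

lemma auxSB1 {n : ℕ} (g h : Matrix (Fin n) (Fin n) ℝ) (Ψ : Fin n → Fin n → Fin n → ℝ)
    (hdetg : g.det ≠ 0) (hGs : ∀ i j, g⁻¹ i j = g⁻¹ j i) (hhs : ∀ i j, h i j = h j i) :
    (∑ i, ∑ j, ∑ a, ∑ b, (∑ k, ∑ u, ∑ v, ∑ w, ∑ y, ∑ z,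
        Ψ k u v * Ψ w y z * g i w * g j k * g⁻¹ u y * g⁻¹ v z) * g⁻¹ i a * g⁻¹ j b * h a b)
      = ∑ i, ∑ j, ∑ k, ∑ d, ∑ e, ∑ c, Ψ i j k * Ψ d e c * (g⁻¹ j e * g⁻¹ k c * h i d) := by
  calc (∑ i, ∑ j, ∑ a, ∑ b, (∑ k, ∑ u, ∑ v, ∑ w, ∑ y, ∑ z,
        Ψ k u v * Ψ w y z * g i w * g j k * g⁻¹ u y * g⁻¹ v z) * g⁻¹ i a * g⁻¹ j b * h a b)
      = ∑ i, ∑ j, ∑ a, ∑ b, ∑ k, ∑ u, ∑ v, ∑ w, ∑ y, ∑ z,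
          Ψ k u v * Ψ w y z * g i w * g j k * g⁻¹ u y * g⁻¹ v z * g⁻¹ i a * g⁻¹ j b * h a b := by
        refine Finset.sum_congr rfl fun i _ => Finset.sum_congr rfl fun j _ =>
          Finset.sum_congr rfl fun a _ => Finset.sum_congr rfl fun b _ => ?_
        simp only [Finset.sum_mul]
    _ = ∑ a, ∑ b, ∑ u, ∑ v, ∑ y, ∑ z, ∑ k, ∑ j, ∑ w, ∑ i,
          (Ψ k u v * Ψ w y z * g⁻¹ u y * g⁻¹ v z * h a b) * (g j k * g⁻¹ j b) * (g i w * g⁻¹ i a) :=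
        auxSB1_re g h Ψ
    _ = ∑ a, ∑ b, ∑ u, ∑ v, ∑ y, ∑ z, ∑ k, ∑ j,
          (Ψ k u v * Ψ a y z * g⁻¹ u y * g⁻¹ v z * h a b) * (g j k * g⁻¹ j b) := by
        refine Finset.sum_congr rfl fun a _ => Finset.sum_congr rfl fun b _ =>
          Finset.sum_congr rfl fun u _ => Finset.sum_congr rfl fun v _ =>
          Finset.sum_congr rfl fun y _ => Finset.sum_congr rfl fun z _ =>
          Finset.sum_congr rfl fun k _ => Finset.sum_congr rfl fun j _ => ?_
        exact aux_collapse g hdetg hGs a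
          (fun w => (Ψ k u v * Ψ w y z * g⁻¹ u y * g⁻¹ v z * h a b) * (g j k * g⁻¹ j b))
    _ = ∑ a, ∑ b, ∑ u, ∑ v, ∑ y, ∑ z, Ψ b u v * Ψ a y z * g⁻¹ u y * g⁻¹ v z * h a b := by
        refine Finset.sum_congr rfl fun a _ => Finset.sum_congr rfl fun b _ =>
          Finset.sum_congr rfl fun u _ => Finset.sum_congr rfl fun v _ =>
          Finset.sum_congr rfl fun y _ => Finset.sum_congr rfl fun z _ => ?_
        exact aux_collapse g hdetg hGs b
          (fun k => Ψ k u v * Ψ a y z * g⁻¹ u y * g⁻¹ v z * h a b)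
    _ = ∑ i, ∑ j, ∑ k, ∑ d, ∑ e, ∑ c, Ψ i j k * Ψ d e c * (g⁻¹ j e * g⁻¹ k c * h i d) :=
        auxSB1_fin g h Ψ hhs

lemma auxSB2 {n : ℕ} (g h : Matrix (Fin n) (Fin n) ℝ) (Ψ : Fin n → Fin n → Fin n → ℝ)
    (hgs : ∀ i j, g i j = g j i) (hGs : ∀ i j, g⁻¹ i j = g⁻¹ j i)
    (hhs : ∀ i j, h i j = h j i) :
    (∑ i, ∑ j, ∑ a, ∑ b, (∑ k, ∑ c, ∑ w, ∑ y,
        Ψ k j c * Ψ w i y * g w k * g⁻¹ y c) * g⁻¹ i a * g⁻¹ j b * h a b)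
      = ∑ I, ∑ J, ∑ K, ∑ A, ∑ B, ∑ C, ∑ P, ∑ Q,
          Ψ I J K * Ψ A B C * (g⁻¹ J P * h P Q * g⁻¹ Q B * g⁻¹ K C * g I A) := by
  calc (∑ i, ∑ j, ∑ a, ∑ b, (∑ k, ∑ c, ∑ w, ∑ y,
        Ψ k j c * Ψ w i y * g w k * g⁻¹ y c) * g⁻¹ i a * g⁻¹ j b * h a b)
      = ∑ i, ∑ j, ∑ a, ∑ b, ∑ k, ∑ c, ∑ w, ∑ y,
          Ψ k j c * Ψ w i y * g w k * g⁻¹ y c * g⁻¹ i a * g⁻¹ j b * h a b := by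
        refine Finset.sum_congr rfl fun i _ => Finset.sum_congr rfl fun j _ =>
          Finset.sum_congr rfl fun a _ => Finset.sum_congr rfl fun b _ => ?_
        simp only [Finset.sum_mul]
    _ = ∑ I, ∑ J, ∑ K, ∑ A, ∑ B, ∑ C, ∑ P, ∑ Q,
          Ψ I J K * Ψ A B C * (g⁻¹ J P * h P Q * g⁻¹ Q B * g⁻¹ K C * g I A) :=
        auxSB2_re g h Ψ hgs hGs hhs

lemma auxDN {n : ℕ} (g h : Matrix (Fin n) (Fin n) ℝ) (Ψ : Fin n → Fin n → Fin n → ℝ)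
    (hΨ : ∀ i j k, Ψ i j k = Ψ i k j) :
    (∑ i, ∑ j, ∑ k, ∑ a, ∑ b, ∑ c, Ψ i j k * Ψ a b c *
        ((-(g⁻¹ * h * g⁻¹)) j b * g⁻¹ k c * g i a
          + g⁻¹ j b * (-(g⁻¹ * h * g⁻¹)) k c * g i a
          + g⁻¹ j b * g⁻¹ k c * h i a))
      = (∑ i, ∑ j, ∑ k, ∑ d, ∑ e, ∑ c, Ψ i j k * Ψ d e c * (g⁻¹ j e * g⁻¹ k c * h i d))
        + (-2 : ℝ) * ∑ I, ∑ J, ∑ K, ∑ A, ∑ B, ∑ C, ∑ P, ∑ Q,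
            Ψ I J K * Ψ A B C * (g⁻¹ J P * h P Q * g⁻¹ Q B * g⁻¹ K C * g I A) := by
  have e1 : (∑ i, ∑ j, ∑ k, ∑ a, ∑ b, ∑ c,
        (-(g⁻¹ * h * g⁻¹)) j b * (Ψ i j k * Ψ a b c * (g⁻¹ k c * g i a)))
      = -∑ I, ∑ J, ∑ K, ∑ A, ∑ B, ∑ C, ∑ P, ∑ Q,
          Ψ I J K * Ψ A B C * (g⁻¹ J P * h P Q * g⁻¹ Q B * g⁻¹ K C * g I A) := by
    calc (∑ i, ∑ j, ∑ k, ∑ a, ∑ b, ∑ c,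
        (-(g⁻¹ * h * g⁻¹)) j b * (Ψ i j k * Ψ a b c * (g⁻¹ k c * g i a)))
        = ∑ i, ∑ j, ∑ k, ∑ a, ∑ b, ∑ c, -∑ q, ∑ p,
            g⁻¹ j p * h p q * (g⁻¹ q b * (Ψ i j k * Ψ a b c * (g⁻¹ k c * g i a))) := by
          refine Finset.sum_congr rfl fun i _ => Finset.sum_congr rfl fun j _ =>
            Finset.sum_congr rfl fun k _ => Finset.sum_congr rfl fun a _ =>
            Finset.sum_congr rfl fun b _ => Finset.sum_congr rfl fun c _ => ?_
          exact aux_Eexp g h j b _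
      _ = -∑ i, ∑ j, ∑ k, ∑ a, ∑ b, ∑ c, ∑ q, ∑ p,
            g⁻¹ j p * h p q * (g⁻¹ q b * (Ψ i j k * Ψ a b c * (g⁻¹ k c * g i a))) := by
          simp only [Finset.sum_neg_distrib]
      _ = -∑ I, ∑ J, ∑ K, ∑ A, ∑ B, ∑ C, ∑ P, ∑ Q,
            Ψ I J K * Ψ A B C * (g⁻¹ J P * h P Q * g⁻¹ Q B * g⁻¹ K C * g I A) := by
          rw [auxD1_re g h Ψ]
  have e2 : (∑ i, ∑ j, ∑ k, ∑ a, ∑ b, ∑ c,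
        (-(g⁻¹ * h * g⁻¹)) k c * (Ψ i j k * Ψ a b c * (g⁻¹ j b * g i a)))
      = -∑ I, ∑ J, ∑ K, ∑ A, ∑ B, ∑ C, ∑ P, ∑ Q,
          Ψ I J K * Ψ A B C * (g⁻¹ J P * h P Q * g⁻¹ Q B * g⁻¹ K C * g I A) := by
    calc (∑ i, ∑ j, ∑ k, ∑ a, ∑ b, ∑ c,
        (-(g⁻¹ * h * g⁻¹)) k c * (Ψ i j k * Ψ a b c * (g⁻¹ j b * g i a)))
        = ∑ i, ∑ j, ∑ k, ∑ a, ∑ b, ∑ c, -∑ q, ∑ p,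
            g⁻¹ k p * h p q * (g⁻¹ q c * (Ψ i j k * Ψ a b c * (g⁻¹ j b * g i a))) := by
          refine Finset.sum_congr rfl fun i _ => Finset.sum_congr rfl fun j _ =>
            Finset.sum_congr rfl fun k _ => Finset.sum_congr rfl fun a _ =>
            Finset.sum_congr rfl fun b _ => Finset.sum_congr rfl fun c _ => ?_
          exact aux_Eexp g h k c _
      _ = -∑ i, ∑ j, ∑ k, ∑ a, ∑ b, ∑ c, ∑ q, ∑ p,
            g⁻¹ k p * h p q * (g⁻¹ q c * (Ψ i j k * Ψ a b c * (g⁻¹ j b * g i a))) := by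
          simp only [Finset.sum_neg_distrib]
      _ = -∑ I, ∑ J, ∑ K, ∑ A, ∑ B, ∑ C, ∑ P, ∑ Q,
            Ψ I J K * Ψ A B C * (g⁻¹ J P * h P Q * g⁻¹ Q B * g⁻¹ K C * g I A) := by
          rw [auxD2_re g h Ψ hΨ]
  calc (∑ i, ∑ j, ∑ k, ∑ a, ∑ b, ∑ c, Ψ i j k * Ψ a b c *
        ((-(g⁻¹ * h * g⁻¹)) j b * g⁻¹ k c * g i a
          + g⁻¹ j b * (-(g⁻¹ * h * g⁻¹)) k c * g i a
          + g⁻¹ j b * g⁻¹ k c * h i a))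
      = ∑ i, ∑ j, ∑ k, ∑ a, ∑ b, ∑ c,
          ((-(g⁻¹ * h * g⁻¹)) j b * (Ψ i j k * Ψ a b c * (g⁻¹ k c * g i a))
            + ((-(g⁻¹ * h * g⁻¹)) k c * (Ψ i j k * Ψ a b c * (g⁻¹ j b * g i a))
              + Ψ i j k * Ψ a b c * (g⁻¹ j b * g⁻¹ k c * h i a))) := by
        refine Finset.sum_congr rfl fun i _ => Finset.sum_congr rfl fun j _ =>
          Finset.sum_congr rfl fun k _ => Finset.sum_congr rfl fun a _ =>
          Finset.sum_congr rfl fun b _ => Finset.sum_congr rfl fun c _ => ?_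
        ring
    _ = (∑ i, ∑ j, ∑ k, ∑ a, ∑ b, ∑ c,
          (-(g⁻¹ * h * g⁻¹)) j b * (Ψ i j k * Ψ a b c * (g⁻¹ k c * g i a)))
        + ((∑ i, ∑ j, ∑ k, ∑ a, ∑ b, ∑ c,
          (-(g⁻¹ * h * g⁻¹)) k c * (Ψ i j k * Ψ a b c * (g⁻¹ j b * g i a)))
        + ∑ i, ∑ j, ∑ k, ∑ a, ∑ b, ∑ c,
            Ψ i j k * Ψ a b c * (g⁻¹ j b * g⁻¹ k c * h i a)) := by
        simp only [Finset.sum_add_distrib]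
    _ = (∑ i, ∑ j, ∑ k, ∑ d, ∑ e, ∑ c, Ψ i j k * Ψ d e c * (g⁻¹ j e * g⁻¹ k c * h i d))
        + (-2 : ℝ) * ∑ I, ∑ J, ∑ K, ∑ A, ∑ B, ∑ C, ∑ P, ∑ Q,
            Ψ I J K * Ψ A B C * (g⁻¹ J P * h P Q * g⁻¹ Q B * g⁻¹ K C * g I A) := by
        rw [e1, e2]; ring

lemma auxKEY {n : ℕ} (g h : Matrix (Fin n) (Fin n) ℝ) (Ψ : Fin n → Fin n → Fin n → ℝ)
    (hdetg : g.det ≠ 0) (hgs : ∀ i j, g i j = g j i) (hGs : ∀ i j, g⁻¹ i j = g⁻¹ j i)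
    (hhs : ∀ i j, h i j = h j i) (hΨ : ∀ i j k, Ψ i j k = Ψ i k j) :
    ip2 g (stressEnergy g Ψ) h =
      (∑ i, ∑ j, ∑ k, ∑ a, ∑ b, ∑ c, Ψ i j k * Ψ a b c *
        ((-(g⁻¹ * h * g⁻¹)) j b * g⁻¹ k c * g i a
          + g⁻¹ j b * (-(g⁻¹ * h * g⁻¹)) k c * g i a
          + g⁻¹ j b * g⁻¹ k c * h i a))
      + norm2T g Ψ * (g⁻¹ * h).trace / 2 := by
  rw [auxDN g h Ψ hΨ]
  calc ip2 g (stressEnergy g Ψ) h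
      = ∑ i, ∑ j, ∑ a, ∑ b,
          ((1 / 2 * norm2T g Ψ) * (g i j * g⁻¹ i a * g⁻¹ j b * h a b)
            + ((∑ k, ∑ u, ∑ v, ∑ w, ∑ y, ∑ z,
                Ψ k u v * Ψ w y z * g i w * g j k * g⁻¹ u y * g⁻¹ v z) * g⁻¹ i a * g⁻¹ j b * h a b
              + (-2 : ℝ) * ((∑ k, ∑ c, ∑ w, ∑ y,
                  Ψ k j c * Ψ w i y * g w k * g⁻¹ y c) * g⁻¹ i a * g⁻¹ j b * h a b))) := by
        simp only [ip2, stressEnergy, circT]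
        refine Finset.sum_congr rfl fun i _ => Finset.sum_congr rfl fun j _ =>
          Finset.sum_congr rfl fun a _ => Finset.sum_congr rfl fun b _ => ?_
        ring
    _ = (1 / 2 * norm2T g Ψ) * (∑ i, ∑ j, ∑ a, ∑ b, g i j * g⁻¹ i a * g⁻¹ j b * h a b)
        + ((∑ i, ∑ j, ∑ a, ∑ b, (∑ k, ∑ u, ∑ v, ∑ w, ∑ y, ∑ z,
              Ψ k u v * Ψ w y z * g i w * g j k * g⁻¹ u y * g⁻¹ v z) * g⁻¹ i a * g⁻¹ j b * h a b)
          + (-2 : ℝ) * (∑ i, ∑ j, ∑ a, ∑ b, (∑ k, ∑ c, ∑ w, ∑ y,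
              Ψ k j c * Ψ w i y * g w k * g⁻¹ y c) * g⁻¹ i a * g⁻¹ j b * h a b)) := by
        simp only [Finset.sum_add_distrib]
        rw [aux_pull4 (1 / 2 * norm2T g Ψ), aux_pull4 (-2 : ℝ)]
    _ = (∑ i, ∑ j, ∑ k, ∑ d, ∑ e, ∑ c, Ψ i j k * Ψ d e c * (g⁻¹ j e * g⁻¹ k c * h i d))
        + (-2 : ℝ) * (∑ I, ∑ J, ∑ K, ∑ A, ∑ B, ∑ C, ∑ P, ∑ Q,
            Ψ I J K * Ψ A B C * (g⁻¹ J P * h P Q * g⁻¹ Q B * g⁻¹ K C * g I A))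
        + norm2T g Ψ * (g⁻¹ * h).trace / 2 := by
        rw [auxSA g h hdetg hGs hhs, auxSB1 g h Ψ hdetg hGs hhs,
          auxSB2 g h Ψ hgs hGs hhs]
        ring

lemma aux_hnrm {n : ℕ} (g h : Matrix (Fin n) (Fin n) ℝ) (Ψ : Fin n → Fin n → Fin n → ℝ)
    (hdetg : g.det ≠ 0) :
    HasDerivAt (fun t : ℝ => norm2T (g + t • h) Ψ)
      (∑ i, ∑ j, ∑ k, ∑ a, ∑ b, ∑ c, Ψ i j k * Ψ a b c *
        ((-(g⁻¹ * h * g⁻¹)) j b * g⁻¹ k c * g i a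
          + g⁻¹ j b * (-(g⁻¹ * h * g⁻¹)) k c * g i a
          + g⁻¹ j b * g⁻¹ k c * h i a)) 0 := by
  have hfun : (fun t : ℝ => norm2T (g + t • h) Ψ)
      = fun t : ℝ => ∑ i, ∑ j, ∑ k, ∑ a, ∑ b, ∑ c,
          Ψ i j k * (g + t • h)⁻¹ j b * (g + t • h)⁻¹ k c * (g + t • h) i a * Ψ a b c := rfl
  rw [hfun]
  refine HasDerivAt.fun_sum fun i _ => ?_
  refine HasDerivAt.fun_sum fun j _ => ?_
  refine HasDerivAt.fun_sum fun k _ => ?_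
  refine HasDerivAt.fun_sum fun a _ => ?_
  refine HasDerivAt.fun_sum fun b _ => ?_
  refine HasDerivAt.fun_sum fun c _ => ?_
  have H := ((((hasDerivAt_const (0:ℝ) (Ψ i j k)).fun_mul (aux_hNd g h hdetg j b)).fun_mul
      (aux_hNd g h hdetg k c)).fun_mul (aux_hMd g h i a)).mul_const (Ψ a b c)
  refine H.congr_deriv ?_
  simp only [zero_smul, add_zero]
  ring

/-- t ↦ |Ψ|²_{g+th}·√det(g+th) has derivative ⟨T_g(Ψ),h⟩_g·√det g at t = 0. -/
theorem hasDerivAt_norm2T_sqrtDet {n : ℕ} (hn : 2 ≤ n)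
    (g : Matrix (Fin n) (Fin n) ℝ) (hg : g.PosDef)
    (h : Matrix (Fin n) (Fin n) ℝ) (hh : h.IsSymm)
    (Ψ : Fin n → Fin n → Fin n → ℝ) (hΨ : ∀ i j k, Ψ i j k = Ψ i k j)
    (hcon : conT Ψ = fun _ => (0 : ℝ)) :
    HasDerivAt (fun t : ℝ => norm2T (g + t • h) Ψ * Real.sqrt (g + t • h).det)
      (ip2 g (stressEnergy g Ψ) (fun i j => h i j) * Real.sqrt g.det) 0 := by
  have hdetg : g.det ≠ 0 := hg.det_pos.ne'
  have hgs : ∀ i j, g i j = g j i := fun i j => by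
    have := hg.isHermitian.apply i j
    simpa using this.symm
  have hGs : ∀ i j, g⁻¹ i j = g⁻¹ j i := fun i j => by
    have := hg.isHermitian.inv.apply i j
    simpa using this.symm
  have hhs : ∀ i j, h i j = h j i := fun i j => (hh.apply j i)
  have KEY := auxKEY g h Ψ hdetg hgs hGs hhs hΨ
  have hsq : HasDerivAt (fun t : ℝ => Real.sqrt (g + t • h).det)
      (g.det * (g⁻¹ * h).trace / (2 * Real.sqrt g.det)) 0 := by
    have := (aux_hdetd g h hdetg).sqrt (by simpa using hdetg)
    simpa using this
  have hmain := (aux_hnrm g h Ψ hdetg).fun_mul hsq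
  simp only [zero_smul, add_zero] at hmain
  refine hmain.congr_deriv ?_
  symm
  have hfix : (fun i j => h i j) = h := rfl
  rw [hfix, KEY]
  have hs : Real.sqrt g.det * Real.sqrt g.det = g.det := Real.mul_self_sqrt hg.det_pos.le
  have hs0 : Real.sqrt g.det ≠ 0 := Real.sqrt_ne_zero'.mpr hg.det_pos
  exact aux_comb _ _ _ _ _ hs hs0

end ProjFunctional
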